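/- If (A_{n,1})_{n≥1} defines an analytic linear Lie rack structure on V via x ▷ y = y + Σ A_{n,1}(x,...,x,y), then the bilinear map [x,y] := A_{1,1}(x,y) is a left Leibniz bracket, i.e. [x,[y,z]] = [[x,y],z] + [y,[x,z]] for all x,y,z. -/

import Mathlib

def adiag {V : Type*} [AddCommGroup V] [Module ℝ V]
    (A : (n : ℕ) → MultilinearMap ℝ (fun _ : Fin (n + 1) => V) V)
    (n : ℕ) (x y : V) : V :=
  A n (Fin.snoc (fun _ => x) y)

section aux

set_option linter.unusedSectionVars false

variable {V : Type*} [AddCommGroup V] [Module ℝ V]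
variable (A : (n : ℕ) → MultilinearMap ℝ (fun _ : Fin (n + 1) => V) V)

lemma update_last_eq (n : ℕ) (x a w : V) :
    Function.update (Fin.snoc (fun _ : Fin n => x) a : Fin (n+1) → V) (Fin.last n) w
      = Fin.snoc (fun _ : Fin n => x) w := Fin.update_snoc_last _ _ _

lemma adiag_add_right (n : ℕ) (x a b : V) :
    adiag A n x (a + b) = adiag A n x a + adiag A n x b := by
  unfold adiag
  rw [← update_last_eq n x a (a + b), (A n).map_update_add, update_last_eq, update_last_eq]

lemma adiag_smul_right (n : ℕ) (c : ℝ) (x a : V) :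
    adiag A n x (c • a) = c • adiag A n x a := by
  unfold adiag
  rw [← update_last_eq n x a (c • a), (A n).map_update_smul, update_last_eq]

/-- `adiag A n x` as a linear map in the last slot. -/
def adiagL (n : ℕ) (x : V) : V →ₗ[ℝ] V where
  toFun := adiag A n x
  map_add' := adiag_add_right A n x
  map_smul' := fun c a => adiag_smul_right A n c x a

@[simp] lemma adiagL_apply (n : ℕ) (x w : V) : adiagL A n x w = adiag A n x w := rfl

lemma adiag_smul_left (n : ℕ) (s : ℝ) (x y : V) :
    adiag A n (s • x) y = s ^ n • adiag A n x y := by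
  unfold adiag
  have h : (Fin.snoc (fun _ : Fin n => s • x) y : Fin (n+1) → V)
      = fun i => (Fin.snoc (fun _ : Fin n => s) 1 : Fin (n+1) → ℝ) i •
        (Fin.snoc (fun _ : Fin n => x) y : Fin (n+1) → V) i := by
    funext i
    refine Fin.lastCases ?_ (fun j => ?_) i
    · simp
    · simp [Fin.snoc_castSucc]
  rw [h, (A n).map_smul_univ]
  congr 1
  rw [Fin.prod_univ_castSucc]
  simp

lemma snoc_fst_eq_update (w u c : V) : (Fin.snoc (fun _ : Fin 1 => u) w : Fin 2 → V)
    = Function.update (Fin.snoc (fun _ : Fin 1 => c) w) ((0 : Fin 1).castSucc) u := by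
  have h : (fun _ : Fin 1 => u) = Function.update (fun _ : Fin 1 => c) 0 u := by
    funext j; fin_cases j; simp
  rw [h, Fin.snoc_update]

lemma adiag_one_add_left (a b w : V) :
    adiag A 1 (a + b) w = adiag A 1 a w + adiag A 1 b w := by
  unfold adiag
  rw [snoc_fst_eq_update w (a + b) a, (A 1).map_update_add, ← snoc_fst_eq_update w a a,
    ← snoc_fst_eq_update w b a]

lemma adiag_one_smul_left (c : ℝ) (a w : V) :
    adiag A 1 (c • a) w = c • adiag A 1 a w := by
  unfold adiag
  rw [snoc_fst_eq_update w (c • a) a, (A 1).map_update_smul, ← snoc_fst_eq_update w a a]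

end aux

section analytic

set_option linter.unusedSectionVars false

variable {V : Type*} [NormedAddCommGroup V] [NormedSpace ℝ V] [FiniteDimensional ℝ V]

/-- The test sequence `1/(n+2)`, positive and `≤ 1/2`, tending to `0`. -/
noncomputable def tseq (n : ℕ) : ℝ := 1 / (n + 2)

lemma tseq_pos (n : ℕ) : 0 < tseq n := by rw [tseq]; positivity

lemma tseq_le (n : ℕ) : tseq n ≤ 1 / 2 := by
  rw [tseq, div_le_div_iff₀ (by positivity) (by norm_num)]
  norm_num

lemma tseq_tendsto : Filter.Tendsto tseq Filter.atTop (nhds 0) := by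
  have h : tseq = fun n : ℕ => 1 / ((n : ℝ) + 1 + 1) := by
    funext n; rw [tseq]; ring_nf
  rw [h]
  have := (tendsto_one_div_add_atTop_nhds_zero_nat (𝕜 := ℝ)).comp (Filter.tendsto_add_atTop_nat 1)
  convert this using 2 with n
  simp [Function.comp]

lemma summable_of_pow_smul_shift {f : ℕ → V}
    (h : ∀ t : ℝ, Summable fun k => t ^ (k + 1) • f k) (t : ℝ) :
    Summable fun k => t ^ k • f k := by
  rcases eq_or_ne t 0 with rfl | ht
  · apply summable_of_ne_finset_zero (s := {0})
    intro k hk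
    simp only [Finset.mem_singleton] at hk
    rw [zero_pow hk, zero_smul]
  · have h2 := (h t).const_smul t⁻¹
    have : (fun k => t⁻¹ • t ^ (k + 1) • f k) = fun k => t ^ k • f k := by
      funext k
      rw [smul_smul, pow_succ, mul_comm (t ^ k) t, ← mul_assoc, inv_mul_cancel₀ ht, one_mul]
    rwa [this] at h2

/-- If a vector-valued power series is summable for all parameters, then along `tseq`
its sum tends to the constant coefficient. -/
lemma tendsto_tsum_pow_smul {f : ℕ → V}
    (h : ∀ t : ℝ, Summable fun k => t ^ k • f k) :
    Filter.Tendsto (fun n => ∑' k, (tseq n) ^ k • f k) Filter.atTop (nhds (f 0)) := by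
  have hnorm : Summable fun k => ‖((1:ℝ)/2) ^ k • f k‖ := (h (1/2)).norm
  have key : Filter.Tendsto (fun n => ∑' k, (tseq n) ^ k • f k) Filter.atTop
      (nhds (∑' k, (0:ℝ) ^ k • f k)) := by
    apply tendsto_tsum_of_dominated_convergence hnorm
    · intro k
      exact (((continuous_pow k).tendsto 0).comp tseq_tendsto).smul_const (f k)
    · filter_upwards with n k
      rw [norm_smul, norm_smul, norm_pow, norm_pow, Real.norm_eq_abs, Real.norm_eq_abs,
        abs_of_pos (tseq_pos n), abs_of_pos (by norm_num : (0:ℝ) < 1/2)]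
      have hk : tseq n ^ k ≤ (1/2 : ℝ) ^ k :=
        pow_le_pow_left₀ (tseq_pos n).le (tseq_le n) k
      exact mul_le_mul_of_nonneg_right hk (norm_nonneg _)
  have h0 : (∑' k, (0:ℝ) ^ k • f k) = f 0 := by
    rw [tsum_eq_single 0]
    · simp
    · intro k hk
      rw [zero_pow hk, zero_smul]
  rwa [h0] at key

/-- Coefficient-extraction: if `∑ t^{k+1} • f k = 0` for all `t`, then `f 0 = 0`. -/
lemma coeff_zero_of_tsum_eq_zero {f : ℕ → V}
    (hsum : ∀ t : ℝ, Summable fun k => t ^ (k + 1) • f k)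
    (hzero : ∀ t : ℝ, (∑' k, t ^ (k + 1) • f k) = 0) :
    f 0 = 0 := by
  have hS := summable_of_pow_smul_shift hsum
  have hz : ∀ t : ℝ, t ≠ 0 → (∑' k, t ^ k • f k) = 0 := by
    intro t ht
    have h1 : (∑' k, t ^ (k + 1) • f k) = t • ∑' k, t ^ k • f k := by
      rw [← Summable.tsum_const_smul t (hS t)]
      congr 1
      funext k
      rw [smul_smul, pow_succ, mul_comm]
    have h2 := hzero t
    rw [h1] at h2
    rcases smul_eq_zero.1 h2 with h | h
    · exact absurd h ht
    · exact h
  have hten := tendsto_tsum_pow_smul hS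
  have hconst : (fun n => ∑' k, (tseq n) ^ k • f k) = fun _ => (0 : V) := by
    funext n
    exact hz _ (tseq_pos n).ne'
  rw [hconst] at hten
  exact tendsto_nhds_unique hten tendsto_const_nhds

end analytic

/-- If `(A_{n,1})_{n ≥ 1}` defines an analytic linear Lie rack structure on `V` via
`x ▷ y = y + Σ A_{n,1}(x,…,x,y)`, then `[x,y] := A_{1,1}(x,y)` is a left Leibniz bracket. -/
theorem stmt_7 {V : Type*} [NormedAddCommGroup V] [NormedSpace ℝ V] [FiniteDimensional ℝ V]
    (A : (n : ℕ) → MultilinearMap ℝ (fun _ : Fin (n + 1) => V) V)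
    (hA0 : ∀ v : Fin 1 → V, A 0 v = v 0)
    (hsymm : ∀ (n : ℕ) (x : Fin n → V) (y : V) (σ : Equiv.Perm (Fin n)),
      A n (Fin.snoc (x ∘ σ) y) = A n (Fin.snoc x y))
    (hconv : ∀ x y : V, Summable fun n => adiag A (n + 1) x y)
    (op : V → V → V)
    (hop : ∀ x y : V, op x y = y + ∑' n : ℕ, adiag A (n + 1) x y)
    (hdist : ∀ x y z : V, op x (op y z) = op (op x y) (op x z)) :
    ∀ x y z : V,
      adiag A 1 x (adiag A 1 y z) =
        adiag A 1 (adiag A 1 x y) z + adiag A 1 y (adiag A 1 x z) := by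
  intro x y z
  classical
  -- linearity of `op v` in the second argument
  have hopadd : ∀ v a b : V, op v (a + b) = op v a + op v b := by
    intro v a b
    rw [hop v (a + b), hop v a, hop v b]
    have h1 : (fun n => adiag A (n+1) v (a + b))
        = fun n => adiag A (n+1) v a + adiag A (n+1) v b :=
      funext fun n => adiag_add_right A (n+1) v a b
    rw [h1, Summable.tsum_add (hconv v a) (hconv v b)]
    abel
  have hopsmul : ∀ (v : V) (c : ℝ) (a : V), op v (c • a) = c • op v a := by
    intro v c a
    rw [hop v (c • a), hop v a]
    have h1 : (fun n => adiag A (n+1) v (c • a)) = fun n => c • adiag A (n+1) v a :=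
      funext fun n => adiag_smul_right A (n+1) c v a
    rw [h1, Summable.tsum_const_smul c (hconv v a), smul_add]
  -- `op v` as a continuous linear map
  let Φ : V → V →L[ℝ] V := fun v => LinearMap.toContinuousLinearMap
    { toFun := op v
      map_add' := hopadd v
      map_smul' := fun c a => hopsmul v c a }
  have hΦ : ∀ v w, Φ v w = op v w := fun v w => rfl
  -- `adiag A 1 y` as a continuous linear map
  let D1y : V →L[ℝ] V := LinearMap.toContinuousLinearMap (adiagL A 1 y)
  have hD1y : ∀ w, D1y w = adiag A 1 y w := fun w => rfl
  -- summability facts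
  have hc1 : ∀ (t : ℝ) (a b : V), Summable fun k => t ^ (k+1) • adiag A (k+1) a b := by
    intro t a b
    have h := hconv (t • a) b
    have h2 : (fun n => adiag A (n+1) (t • a) b) = fun n => t ^ (n+1) • adiag A (n+1) a b :=
      funext fun n => adiag_smul_left A (n+1) t a b
    rwa [h2] at h
  have hc2 : ∀ (t : ℝ) (a b : V), Summable fun k => t ^ k • adiag A (k+1) a b :=
    fun t a b => summable_of_pow_smul_shift (fun t' => hc1 t' a b) t
  have hmap : ∀ (L : V →L[ℝ] V) (f : ℕ → V), Summable f → Summable fun k => L (f k) :=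
    fun L f hf => hf.map L.toLinearMap.toAddMonoidHom L.continuous
  -- expansion of op with scaled first argument
  have hopexp : ∀ (s : ℝ) (v w : V),
      op (s • v) w = w + ∑' m, s ^ (m+1) • adiag A (m+1) v w := by
    intro s v w
    rw [hop]
    congr 1
    exact tsum_congr fun m => adiag_smul_left A (m+1) s v w
  -- Step A : op (s•x) is an automorphism of the bilinear coefficient
  have starA : ∀ s : ℝ,
      op (s • x) (adiag A 1 y z) = adiag A 1 (op (s • x) y) (op (s • x) z) := by
    intro s
    set f : ℕ → V := fun k =>
      Φ (s • x) (adiag A (k+1) y z) - adiag A (k+1) (op (s • x) y) (op (s • x) z) with hf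
    have s1' : ∀ t : ℝ, Summable fun k => t ^ (k+1) • Φ (s • x) (adiag A (k+1) y z) := by
      intro t
      have s1 := hmap (Φ (s • x)) _ (hc1 t y z)
      have h2 : (fun k => Φ (s • x) (t ^ (k+1) • adiag A (k+1) y z))
          = fun k => t ^ (k+1) • Φ (s • x) (adiag A (k+1) y z) :=
        funext fun k => (Φ (s • x)).map_smul _ _
      rwa [h2] at s1
    have hsum : ∀ t : ℝ, Summable fun k => t ^ (k+1) • f k := by
      intro t
      have := (s1' t).sub (hc1 t (op (s • x) y) (op (s • x) z))
      have h3 : (fun k => t ^ (k+1) • Φ (s • x) (adiag A (k+1) y z)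
            - t ^ (k+1) • adiag A (k+1) (op (s • x) y) (op (s • x) z))
          = fun k => t ^ (k+1) • f k := by
        funext k
        rw [hf, ← smul_sub]
      rwa [h3] at this
    have hzero : ∀ t : ℝ, (∑' k, t ^ (k+1) • f k) = 0 := by
      intro t
      have hd := hdist (s • x) (t • y) z
      have hL : op (s • x) (op (t • y) z)
          = op (s • x) z + ∑' k, t ^ (k+1) • Φ (s • x) (adiag A (k+1) y z) := by
        rw [← hΦ (s • x), hopexp t y z, map_add, (Φ (s • x)).map_tsum (hc1 t y z)]
        congr 1
        exact tsum_congr fun k => (Φ (s • x)).map_smul _ _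
      have hR : op (op (s • x) (t • y)) (op (s • x) z)
          = op (s • x) z
            + ∑' k, t ^ (k+1) • adiag A (k+1) (op (s • x) y) (op (s • x) z) := by
        rw [hopsmul (s • x) t y, hopexp t (op (s • x) y) (op (s • x) z)]
      rw [hL, hR] at hd
      have hcancel := add_left_cancel hd
      have h4 : (∑' k, t ^ (k+1) • f k)
          = (∑' k, t ^ (k+1) • Φ (s • x) (adiag A (k+1) y z))
            - ∑' k, t ^ (k+1) • adiag A (k+1) (op (s • x) y) (op (s • x) z) := by
        rw [← Summable.tsum_sub (s1' t) (hc1 t (op (s • x) y) (op (s • x) z))]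
        exact tsum_congr fun k => by rw [hf, smul_sub]
      rw [h4, hcancel, sub_self]
    have hf0 := coeff_zero_of_tsum_eq_zero hsum hzero
    have h5 : Φ (s • x) (adiag A 1 y z) = adiag A 1 (op (s • x) y) (op (s • x) z) :=
      sub_eq_zero.1 hf0
    rw [← hΦ (s • x) (adiag A 1 y z)]
    exact h5
  -- Step B : extract the coefficient of s
  set g : ℕ → V := fun m =>
    adiag A (m+1) x (adiag A 1 y z) - adiag A 1 y (adiag A (m+1) x z) with hg
  have sc : ∀ s : ℝ, Summable fun m => s ^ (m+1) • adiag A 1 y (adiag A (m+1) x z) := by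
    intro s
    have h := hmap D1y _ (hc1 s x z)
    have h2 : (fun m => D1y (s ^ (m+1) • adiag A (m+1) x z))
        = fun m => s ^ (m+1) • adiag A 1 y (adiag A (m+1) x z) := by
      funext m
      rw [D1y.map_smul, hD1y]
    rwa [h2] at h
  have keyB : ∀ s : ℝ,
      (∑' m, s ^ (m+1) • g m)
        = adiag A 1 (∑' m, s ^ (m+1) • adiag A (m+1) x y) (op (s • x) z) := by
    intro s
    have h1 := starA s
    have hyw : adiag A 1 y (op (s • x) z)
        = adiag A 1 y z + ∑' m, s ^ (m+1) • adiag A 1 y (adiag A (m+1) x z) := by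
      rw [hopexp s x z, adiag_add_right]
      congr 1
      rw [← hD1y, D1y.map_tsum (hc1 s x z)]
      exact tsum_congr fun m => by rw [D1y.map_smul, hD1y]
    have hru : adiag A 1 (op (s • x) y) (op (s • x) z)
        = adiag A 1 y (op (s • x) z)
          + adiag A 1 (∑' m, s ^ (m+1) • adiag A (m+1) x y) (op (s • x) z) := by
      rw [hopexp s x y, adiag_one_add_left]
    rw [hopexp s x (adiag A 1 y z), hru, hyw] at h1
    rw [add_assoc] at h1
    have h2 := add_left_cancel h1
    have h3 : (∑' m, s ^ (m+1) • g m)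
        = (∑' m, s ^ (m+1) • adiag A (m+1) x (adiag A 1 y z))
          - ∑' m, s ^ (m+1) • adiag A 1 y (adiag A (m+1) x z) := by
      rw [← Summable.tsum_sub (hc1 s x (adiag A 1 y z)) (sc s)]
      exact tsum_congr fun m => by rw [hg, smul_sub]
    rw [h3, h2]
    abel
  have keyB2 : ∀ s : ℝ, s ≠ 0 →
      (∑' m, s ^ m • g m)
        = adiag A 1 (∑' m, s ^ m • adiag A (m+1) x y) (op (s • x) z) := by
    intro s hs
    have hgs : ∀ t : ℝ, Summable fun m => t ^ (m+1) • g m := by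
      intro t
      have := (hc1 t x (adiag A 1 y z)).sub (sc t)
      have h2 : (fun m => t ^ (m+1) • adiag A (m+1) x (adiag A 1 y z)
            - t ^ (m+1) • adiag A 1 y (adiag A (m+1) x z)) = fun m => t ^ (m+1) • g m := by
        funext m
        rw [hg, ← smul_sub]
      rwa [h2] at this
    have hL : (∑' m, s ^ (m+1) • g m) = s • ∑' m, s ^ m • g m := by
      rw [← Summable.tsum_const_smul s (summable_of_pow_smul_shift hgs s)]
      exact tsum_congr fun m => by rw [smul_smul, ← pow_succ']
    have hR : (∑' m, s ^ (m+1) • adiag A (m+1) x y)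
        = s • ∑' m, s ^ m • adiag A (m+1) x y := by
      rw [← Summable.tsum_const_smul s (hc2 s x y)]
      exact tsum_congr fun m => by rw [smul_smul, ← pow_succ']
    have h1 := keyB s
    rw [hL, hR, adiag_one_smul_left] at h1
    exact smul_right_injective V hs h1
  -- the bilinear map as a continuous bilinear map
  let E : V →ₗ[ℝ] V →L[ℝ] V :=
    { toFun := fun u => LinearMap.toContinuousLinearMap (adiagL A 1 u)
      map_add' := by
        intro a b
        ext w
        exact adiag_one_add_left A a b w
      map_smul' := by
        intro c a
        ext w
        exact adiag_one_smul_left A c a w }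
  let Bc : V →L[ℝ] V →L[ℝ] V := LinearMap.toContinuousLinearMap E
  have hBc : ∀ u w, Bc u w = adiag A 1 u w := fun u w => rfl
  -- limits
  have hgsum : ∀ t : ℝ, Summable fun m => t ^ m • g m := by
    intro t
    apply summable_of_pow_smul_shift
    intro t'
    have := (hc1 t' x (adiag A 1 y z)).sub (sc t')
    have h2 : (fun m => t' ^ (m+1) • adiag A (m+1) x (adiag A 1 y z)
          - t' ^ (m+1) • adiag A 1 y (adiag A (m+1) x z)) = fun m => t' ^ (m+1) • g m := by
      funext m
      rw [hg, ← smul_sub]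
    rwa [h2] at this
  have hLlim : Filter.Tendsto (fun n => ∑' m, (tseq n) ^ m • g m)
      Filter.atTop (nhds (g 0)) := tendsto_tsum_pow_smul hgsum
  have hp : Filter.Tendsto (fun n => ∑' m, (tseq n) ^ m • adiag A (m+1) x y)
      Filter.atTop (nhds (adiag A 1 x y)) := tendsto_tsum_pow_smul (fun t => hc2 t x y)
  have hW : Filter.Tendsto (fun n => op (tseq n • x) z) Filter.atTop (nhds z) := by
    have heq : ∀ n, op (tseq n • x) z
        = z + tseq n • ∑' m, (tseq n) ^ m • adiag A (m+1) x z := by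
      intro n
      rw [hopexp, ← Summable.tsum_const_smul (tseq n) (hc2 (tseq n) x z)]
      congr 1
      exact tsum_congr fun m => by rw [smul_smul, ← pow_succ']
    have h2 : Filter.Tendsto
        (fun n => z + tseq n • ∑' m, (tseq n) ^ m • adiag A (m+1) x z)
        Filter.atTop (nhds (z + (0:ℝ) • adiag A 1 x z)) :=
      tendsto_const_nhds.add
        (tseq_tendsto.smul (tendsto_tsum_pow_smul (fun t => hc2 t x z)))
    rw [zero_smul, add_zero] at h2
    exact h2.congr (fun n => (heq n).symm)
  have hRlim : Filter.Tendsto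
      (fun n => adiag A 1 (∑' m, (tseq n) ^ m • adiag A (m+1) x y) (op (tseq n • x) z))
      Filter.atTop (nhds (adiag A 1 (adiag A 1 x y) z)) := by
    have hcont : Continuous fun q : V × V => Bc q.1 q.2 := Bc.continuous₂
    have := (hcont.tendsto (adiag A 1 x y, z)).comp (hp.prodMk_nhds hW)
    simpa only [hBc, Function.comp_def] using this
  have heq2 : (fun n => ∑' m, (tseq n) ^ m • g m)
      = fun n => adiag A 1 (∑' m, (tseq n) ^ m • adiag A (m+1) x y) (op (tseq n • x) z) :=
    funext fun n => keyB2 _ (tseq_pos n).ne'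
  rw [heq2] at hLlim
  have hfinal := tendsto_nhds_unique hLlim hRlim
  have hg0 : adiag A 1 x (adiag A 1 y z) - adiag A 1 y (adiag A 1 x z)
      = adiag A 1 (adiag A 1 x y) z := hfinal
  exact sub_eq_iff_eq_add.mp hg0
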